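/- arXiv:0903.4577 — 6 statements merged into one kernel-verified Lean document; each statement's English description precedes it below -/
import Mathlib

section
/- Let there be N players, where player i chooses a strategy x^i in the finite set S^i = {x ∈ ℤ^n : A^i x = b^i, 0 ≤ x ≤ u^i} subject to a joint coupling constraint ∑_{i=1}^N B^i x^i ≤ b^0. Let c_j : ℝ≥0 → ℝ≥0 for j = 1,…,n be monotonously increasing functions, and define the cost to player k (given the other strategies) as ∑_j c_j(x^k_j + ∑_{i≠k} x^i_j) − ∑_j c_j(∑_{i≠k} x^i_j). If at least one joint strategy profile satisfying all constraints exists, then there exists a generalized Nash equilibrium, i.e., a feasible profile (y^1,…,y^N) such that no player k can strictly decrease his cost by unilaterally switching to another strategy z^k ∈ S^k keeping the coupling constraint satisfied. -/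
/-- Player `i`'s pure strategy set: integer solutions of `A x = b`, `0 ≤ x ≤ u`. -/
def Strat {dk n : ℕ} (A : Matrix (Fin dk) (Fin n) ℤ) (b : Fin dk → ℤ)
    (u : Fin n → ℤ) (x : Fin n → ℤ) : Prop :=
  A.mulVec x = b ∧ ∀ j, 0 ≤ x j ∧ x j ≤ u j

/-- The coupling constraint `∑ i, Bⁱ xⁱ ≤ b⁰`. -/
def Coupled {N n m : ℕ} (B : Fin N → Matrix (Fin m) (Fin n) ℤ) (b0 : Fin m → ℤ)
    (x : Fin N → Fin n → ℤ) : Prop :=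
  ∀ r, (∑ i, (B i).mulVec (x i)) r ≤ b0 r

/-- Cost to player `k`, given the strategies of all players. -/
noncomputable def Cost {N n : ℕ} (c : Fin n → ℝ → ℝ) (x : Fin N → Fin n → ℤ)
    (k : Fin N) : ℝ :=
  ∑ j, c j ((x k j : ℝ) + ∑ i ∈ Finset.univ.erase k, (x i j : ℝ)) -
    ∑ j, c j (∑ i ∈ Finset.univ.erase k, (x i j : ℝ))

theorem generalized_nash_equilibrium_exists
    (N n m : ℕ) (d : Fin N → ℕ)
    (A : ∀ i : Fin N, Matrix (Fin (d i)) (Fin n) ℤ)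
    (b : ∀ i : Fin N, Fin (d i) → ℤ)
    (u : Fin N → Fin n → ℤ)
    (B : Fin N → Matrix (Fin m) (Fin n) ℤ) (b0 : Fin m → ℤ)
    (c : Fin n → ℝ → ℝ) (hmono : ∀ j, Monotone (c j))
    (hex : ∃ x : Fin N → Fin n → ℤ,
      (∀ i, Strat (A i) (b i) (u i) (x i)) ∧ Coupled B b0 x) :
    ∃ y : Fin N → Fin n → ℤ,
      (∀ i, Strat (A i) (b i) (u i) (y i)) ∧ Coupled B b0 y ∧
      ∀ (k : Fin N) (z : Fin n → ℤ),
        Strat (A k) (b k) (u k) z →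
        Coupled B b0 (Function.update y k z) →
        Cost c y k ≤ Cost c (Function.update y k z) k := by
  classical
  obtain ⟨x0, hx0s, hx0c⟩ := hex
  set F : Set (Fin N → Fin n → ℤ) :=
    {x | (∀ i, Strat (A i) (b i) (u i) (x i)) ∧ Coupled B b0 x} with hF
  have hFfin : F.Finite := by
    apply Set.Finite.subset (Set.Finite.pi (fun i => Set.Finite.pi
      (fun j => Set.finite_Icc (0:ℤ) (u i j))))
    intro x hx
    intro i _
    intro j _
    exact ⟨((hx.1 i).2 j).1, ((hx.1 i).2 j).2⟩
  have hFne : F.Nonempty := ⟨x0, hx0s, hx0c⟩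
  obtain ⟨y, hyF, hymin⟩ := Set.exists_min_image F
    (fun x => ∑ j, c j (∑ i, (x i j : ℝ))) hFfin hFne
  refine ⟨y, hyF.1, hyF.2, ?_⟩
  intro k z hz hc
  have hupd : Function.update y k z ∈ F := by
    refine ⟨fun i => ?_, hc⟩
    rcases eq_or_ne i k with rfl | h
    · simpa using hz
    · simpa [Function.update_of_ne h] using hyF.1 i
  have key := hymin _ hupd
  have herase : ∀ (x : Fin N → Fin n → ℤ) j,
      (x k j : ℝ) + ∑ i ∈ Finset.univ.erase k, (x i j : ℝ) = ∑ i, (x i j : ℝ) := by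
    intro x j
    exact Finset.add_sum_erase Finset.univ (fun i => ((x i j : ℤ) : ℝ)) (Finset.mem_univ k)
  have hsame : ∀ j, ∑ i ∈ Finset.univ.erase k, ((Function.update y k z) i j : ℝ)
      = ∑ i ∈ Finset.univ.erase k, (y i j : ℝ) := by
    intro j
    refine Finset.sum_congr rfl fun i hi => ?_
    rw [Function.update_of_ne (Finset.ne_of_mem_erase hi)]
  have hkey2 : ∀ j, ∑ i, ((Function.update y k z i j : ℤ) : ℝ)
      = (z j : ℝ) + ∑ i ∈ Finset.univ.erase k, (y i j : ℝ) := by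
    intro j
    rw [← herase (Function.update y k z) j, Function.update_self, hsame]
  simp only [hkey2] at key
  unfold Cost
  simp only [herase, hsame, Function.update_self]
  linarith
end

section
/- For any integer matrix D ∈ ℤ^{d×n}, the Graver basis G(D), defined as the set of nonzero z ∈ ker(D) ∩ ℤ^n that cannot be written as z = u + v with u, v nonzero elements of ker(D) ∩ ℤ^n satisfying u_j v_j ≥ 0 for all j, is a finite set. -/
/-- `z` is a Graver basis element of `D`: a nonzero integer kernel element of `D` that is
not the sum of two nonzero sign-compatible integer kernel elements. -/
def InGraver {κ ι : Type*} [Fintype κ] [Fintype ι] (D : Matrix κ ι ℤ) (z : ι → ℤ) : Prop :=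
  z ≠ 0 ∧ D.mulVec z = 0 ∧
    ¬ ∃ u v : ι → ℤ, u ≠ 0 ∧ v ≠ 0 ∧ D.mulVec u = 0 ∧ D.mulVec v = 0 ∧
      (∀ j, 0 ≤ u j * v j) ∧ z = u + v

/-- Embedding of integer vectors into natural vectors via positive/negative parts. -/
private def graverEmb (n : ℕ) (z : Fin n → ℤ) : Fin n × Bool → ℕ :=
  fun p => if p.2 then (z p.1).toNat else (-(z p.1)).toNat

private lemma graverEmb_injective (n : ℕ) : Function.Injective (graverEmb n) := by
  intro z w h
  funext j
  have h1 := congrFun h (j, true)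
  have h2 := congrFun h (j, false)
  simp only [graverEmb, if_true, Bool.false_eq_true, if_false] at h1 h2
  omega

/-- The Graver basis of any integer matrix is a finite set. -/
theorem graver_basis_finite (d n : ℕ) (D : Matrix (Fin d) (Fin n) ℤ) :
    {z : Fin n → ℤ | InGraver D z}.Finite := by
  set S : Set (Fin n → ℤ) := {z | InGraver D z}
  have hanti : IsAntichain (· ≤ ·) (graverEmb n '' S) := by
    rintro _ ⟨z₁, hz₁, rfl⟩ _ ⟨z₂, hz₂, rfl⟩ hne hle
    have hzne : z₁ ≠ z₂ := fun h => hne (by rw [h])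
    obtain ⟨h1ne, h1ker, -⟩ := hz₁
    obtain ⟨h2ne, h2ker, h2ind⟩ := hz₂
    apply h2ind
    refine ⟨z₁, z₂ - z₁, h1ne, sub_ne_zero.mpr fun h => hzne h.symm, h1ker, ?_, ?_, ?_⟩
    · rw [Matrix.mulVec_sub, h2ker, h1ker, sub_zero]
    · intro j
      have hp := hle (j, true)
      have hm := hle (j, false)
      simp only [graverEmb, if_true, Bool.false_eq_true, if_false, Pi.sub_apply] at hp hm ⊢
      have : (0 ≤ z₁ j ∧ z₁ j ≤ z₂ j) ∨ (z₁ j ≤ 0 ∧ z₂ j ≤ z₁ j) := by omega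
      rcases this with ⟨ha, hb⟩ | ⟨ha, hb⟩ <;> nlinarith
    · ext j; simp
  have hpwo : (graverEmb n '' S).PartiallyWellOrderedOn (· ≤ ·) :=
    Set.isPWO_of_wellQuasiOrderedLE (graverEmb n '' S)
  have hfin : (graverEmb n '' S).Finite :=
    hanti.finite_of_partiallyWellOrderedOn hpwo
  exact hfin.of_finite_image ((graverEmb_injective n).injOn)
end

section
/- Graver-test optimality certificate: let D ∈ ℤ^{d×n}, d ∈ ℤ^d, u ∈ ℤ^n_{≥0}, and let f_j : ℝ → ℝ be convex functions for j = 1,…,n. A feasible point x^0 of {x ∈ ℤ^n : Dx = d, 0 ≤ x ≤ u} minimizes ∑_j f_j(x_j) over the feasible set if and only if there is no g ∈ G(D) such that x^0 + g is feasible and ∑_j f_j(x^0_j + g_j) < ∑_j f_j(x^0_j). -/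
/-- Feasibility for the integer program `Dx = d`, `0 ≤ x ≤ u`. -/
def Feas {dd n : ℕ} (D : Matrix (Fin dd) (Fin n) ℤ) (dv : Fin dd → ℤ)
    (u : Fin n → ℤ) (x : Fin n → ℤ) : Prop :=
  D.mulVec x = dv ∧ ∀ j, 0 ≤ x j ∧ x j ≤ u j

lemma graver_conv_key {f : ℝ → ℝ} (hf : ConvexOn ℝ Set.univ f) {x y h : ℝ}
    (hxy : x ≤ y) (hh : 0 ≤ h) : f (x + h) + f y ≤ f x + f (y + h) := by
  rcases eq_or_lt_of_le (show (0:ℝ) ≤ (y - x) + h by linarith) with hs | hs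
  · have h1 : y = x := by linarith
    have h2 : h = 0 := by linarith
    subst h1 h2; simp
  · set s : ℝ := (y - x) + h with hs_def
    have hsne : s ≠ 0 := ne_of_gt hs
    have ha : (0:ℝ) ≤ (y - x) / s := div_nonneg (by linarith) (le_of_lt hs)
    have hb : (0:ℝ) ≤ h / s := div_nonneg hh (le_of_lt hs)
    have hab : (y - x) / s + h / s = 1 := by field_simp; rw [hs_def]
    have i1 := hf.2 (Set.mem_univ x) (Set.mem_univ (y + h)) ha hb hab
    have i2 := hf.2 (Set.mem_univ x) (Set.mem_univ (y + h)) hb ha (by linarith)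
    simp only [smul_eq_mul] at i1 i2
    have e1 : (y - x) / s * x + h / s * (y + h) = x + h := by field_simp; ring
    have e2 : h / s * x + (y - x) / s * (y + h) = y := by field_simp; ring
    rw [e1] at i1; rw [e2] at i2
    have e3 : (y - x) / s * f x + h / s * f x = f x := by
      rw [← add_mul, hab, one_mul]
    have e4 : h / s * f (y + h) + (y - x) / s * f (y + h) = f (y + h) := by
      rw [← add_mul]; rw [add_comm] at hab; rw [hab, one_mul]
    linarith

lemma graver_conv_key' {f : ℝ → ℝ} (hf : ConvexOn ℝ Set.univ f) {x y h : ℝ}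
    (hxy : x ≤ y) (hh : h ≤ 0) : f (y + h) + f x ≤ f y + f (x + h) := by
  have := graver_conv_key hf (show x + h ≤ y + h by linarith) (show (0:ℝ) ≤ -h by linarith)
  have e1 : x + h + -h = x := by ring
  have e2 : y + h + -h = y := by ring
  rw [e1, e2] at this
  linarith

lemma graver_list_sum_nonneg {l : List ℝ} (h : ∀ a ∈ l, 0 ≤ a) : 0 ≤ l.sum := by
  induction l with
  | nil => simp
  | cons a t ih =>
    simp only [List.sum_cons]
    have := h a (by simp)
    have := ih (fun b hb => h b (by simp [hb]))
    linarith

lemma graver_list_sum_nonpos {l : List ℝ} (h : ∀ a ∈ l, a ≤ 0) : l.sum ≤ 0 := by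
  induction l with
  | nil => simp
  | cons a t ih =>
    simp only [List.sum_cons]
    have := h a (by simp)
    have := ih (fun b hb => h b (by simp [hb]))
    linarith

/-- superadditivity of increments of a convex function for same-signed steps -/
lemma graver_list_incr {f : ℝ → ℝ} (hf : ConvexOn ℝ Set.univ f) (t : ℝ) :
    ∀ l : List ℝ, ((∀ a ∈ l, 0 ≤ a) ∨ (∀ a ∈ l, a ≤ 0)) →
    (l.map (fun a => f (t + a) - f t)).sum ≤ f (t + l.sum) - f t := by
  intro l
  induction l with
  | nil => intro _; simp
  | cons a tl ih =>
    intro hsign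
    have hsign' : (∀ b ∈ tl, 0 ≤ b) ∨ (∀ b ∈ tl, b ≤ 0) := by
      rcases hsign with h | h
      · exact Or.inl (fun b hb => h b (by simp [hb]))
      · exact Or.inr (fun b hb => h b (by simp [hb]))
    have ihs := ih hsign'
    simp only [List.map_cons, List.sum_cons]
    have hrw : t + (a + tl.sum) = t + tl.sum + a := by ring
    rw [hrw]
    rcases hsign with h | h
    · have ha : 0 ≤ a := h a (by simp)
      have hts : 0 ≤ tl.sum := graver_list_sum_nonneg (fun b hb => h b (by simp [hb]))
      have key := graver_conv_key hf (show t ≤ t + tl.sum by linarith) ha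
      linarith
    · have ha : a ≤ 0 := h a (by simp)
      have hts : tl.sum ≤ 0 := graver_list_sum_nonpos (fun b hb => h b (by simp [hb]))
      have key := graver_conv_key' hf (show t + tl.sum ≤ t by linarith) ha
      linarith

lemma graver_map_sum_comm {n : ℕ} (l : List (Fin n → ℤ)) (h : (Fin n → ℤ) → Fin n → ℝ) :
    (l.map (fun g => ∑ j, h g j)).sum = ∑ j, (l.map (fun g => h g j)).sum := by
  induction l with
  | nil => simp
  | cons a t ih => simp [ih, Finset.sum_add_distrib]

lemma graver_list_apply_sum {n : ℕ} (l : List (Fin n → ℤ)) (j : Fin n) :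
    (l.map (fun g => g j)).sum = l.sum j := by
  induction l with
  | nil => simp
  | cons a t ih => simp [ih]

lemma graver_list_cast_sum {n : ℕ} (l : List (Fin n → ℤ)) (j : Fin n) :
    (l.map (fun g => ((g j : ℤ) : ℝ))).sum = ((l.sum j : ℤ) : ℝ) := by
  induction l with
  | nil => simp
  | cons a t ih => simp [ih]

/-- Decomposition of a kernel element into conformal Graver elements. -/
lemma graver_decomp {dd n : ℕ} (D : Matrix (Fin dd) (Fin n) ℤ) :
    ∀ m : ℕ, ∀ z : Fin n → ℤ, (∑ j, (z j).natAbs) ≤ m → z ≠ 0 → D.mulVec z = 0 →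
    ∃ l : List (Fin n → ℤ), l.sum = z ∧ ∀ g ∈ l, InGraver D g ∧
      ∀ j, (0 ≤ z j → 0 ≤ g j ∧ g j ≤ z j) ∧ (z j ≤ 0 → z j ≤ g j ∧ g j ≤ 0) := by
  intro m
  induction m with
  | zero =>
    intro z hm hz _
    exfalso
    apply hz
    funext j
    have h0 : ∑ j, (z j).natAbs = 0 := Nat.le_zero.mp hm
    have := Finset.sum_eq_zero_iff.mp h0 j (Finset.mem_univ j)
    simpa using by omega
  | succ m ih =>
    intro z hm hz hker
    by_cases hg : InGraver D z
    · refine ⟨[z], by simp, ?_⟩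
      intro g hgl
      simp only [List.mem_singleton] at hgl
      subst hgl
      exact ⟨hg, fun j => by omega⟩
    · have hex : ∃ u v : Fin n → ℤ, u ≠ 0 ∧ v ≠ 0 ∧ D.mulVec u = 0 ∧ D.mulVec v = 0 ∧
          (∀ j, 0 ≤ u j * v j) ∧ z = u + v := by
        by_contra h
        exact hg ⟨hz, hker, h⟩
      obtain ⟨u, v, hu0, hv0, hku, hkv, hsc, hzuv⟩ := hex
      have hzj : ∀ j, z j = u j + v j := fun j => by rw [hzuv]; rfl
      have hsigns : ∀ j, (0 ≤ u j ∧ 0 ≤ v j) ∨ (u j ≤ 0 ∧ v j ≤ 0) :=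
        fun j => mul_nonneg_iff.mp (hsc j)
      have hcu : ∀ j, (0 ≤ z j → 0 ≤ u j ∧ u j ≤ z j) ∧ (z j ≤ 0 → z j ≤ u j ∧ u j ≤ 0) := by
        intro j; rcases hsigns j with ⟨h1, h2⟩ | ⟨h1, h2⟩ <;> (have := hzj j; omega)
      have hcv : ∀ j, (0 ≤ z j → 0 ≤ v j ∧ v j ≤ z j) ∧ (z j ≤ 0 → z j ≤ v j ∧ v j ≤ 0) := by
        intro j; rcases hsigns j with ⟨h1, h2⟩ | ⟨h1, h2⟩ <;> (have := hzj j; omega)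
      have hadd : ∀ j, (z j).natAbs = (u j).natAbs + (v j).natAbs := by
        intro j; rcases hsigns j with ⟨h1, h2⟩ | ⟨h1, h2⟩ <;> (have := hzj j; omega)
      have hsum : ∑ j, (z j).natAbs = (∑ j, (u j).natAbs) + ∑ j, (v j).natAbs := by
        rw [← Finset.sum_add_distrib]
        exact Finset.sum_congr rfl fun j _ => hadd j
      obtain ⟨ju, hju⟩ := Function.ne_iff.mp hu0
      obtain ⟨jv, hjv⟩ := Function.ne_iff.mp hv0
      simp only [Pi.zero_apply] at hju hjv
      have hupos : 0 < ∑ j, (u j).natAbs := by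
        have h1 : (u ju).natAbs ≤ ∑ j, (u j).natAbs :=
          Finset.single_le_sum (f := fun j => (u j).natAbs) (fun j _ => Nat.zero_le _)
            (Finset.mem_univ ju)
        omega
      have hvpos : 0 < ∑ j, (v j).natAbs := by
        have h1 : (v jv).natAbs ≤ ∑ j, (v j).natAbs :=
          Finset.single_le_sum (f := fun j => (v j).natAbs) (fun j _ => Nat.zero_le _)
            (Finset.mem_univ jv)
        omega
      obtain ⟨lu, hlu_sum, hlu_mem⟩ := ih u (by omega) hu0 hku
      obtain ⟨lv, hlv_sum, hlv_mem⟩ := ih v (by omega) hv0 hkv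
      refine ⟨lu ++ lv, by rw [List.sum_append, hlu_sum, hlv_sum, hzuv], ?_⟩
      intro g hgl
      rcases List.mem_append.mp hgl with hgl | hgl
      · obtain ⟨hgrav, hconf⟩ := hlu_mem g hgl
        refine ⟨hgrav, fun j => ?_⟩
        have h1 := hconf j; have h2 := hcu j
        omega
      · obtain ⟨hgrav, hconf⟩ := hlv_mem g hgl
        refine ⟨hgrav, fun j => ?_⟩
        have h1 := hconf j; have h2 := hcv j
        omega

/-- Graver test: a feasible point is optimal for a separable convex objective iff no
Graver move gives a feasible point with strictly smaller objective value. -/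
theorem graver_optimality_certificate
    (dd n : ℕ) (D : Matrix (Fin dd) (Fin n) ℤ) (dv : Fin dd → ℤ) (u : Fin n → ℤ)
    (f : Fin n → ℝ → ℝ) (hconv : ∀ j, ConvexOn ℝ Set.univ (f j))
    (x0 : Fin n → ℤ) (hx0 : Feas D dv u x0) :
    (∀ x : Fin n → ℤ, Feas D dv u x → ∑ j, f j (x0 j : ℝ) ≤ ∑ j, f j (x j : ℝ)) ↔
      ¬ ∃ g : Fin n → ℤ, InGraver D g ∧ Feas D dv u (x0 + g) ∧
        ∑ j, f j ((x0 j : ℝ) + (g j : ℝ)) < ∑ j, f j (x0 j : ℝ) := by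
  constructor
  · rintro hopt ⟨g, _, hfeas, hlt⟩
    have := hopt _ hfeas
    simp only [Pi.add_apply, Int.cast_add] at this
    linarith
  · intro hno x hx
    by_contra hlt
    push_neg at hlt
    set z : Fin n → ℤ := x - x0 with hz_def
    have hz0 : z ≠ 0 := by
      intro h
      have hxx : x = x0 := by
        have := sub_eq_zero.mp h
        exact this
      rw [hxx] at hlt
      exact absurd hlt (lt_irrefl _)
    have hker : D.mulVec z = 0 := by
      rw [hz_def, Matrix.mulVec_sub, hx.1, hx0.1, sub_self]
    obtain ⟨l, hlsum, hlmem⟩ := graver_decomp D _ z le_rfl hz0 hker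
    have key : ∀ j : Fin n,
        (l.map (fun g => f j ((x0 j : ℝ) + (g j : ℝ)) - f j (x0 j))).sum ≤
          f j ((x0 j : ℝ) + (z j : ℝ)) - f j (x0 j) := by
      intro j
      have hsum' : (l.map (fun g => ((g j : ℤ) : ℝ))).sum = ((z j : ℤ) : ℝ) := by
        rw [graver_list_cast_sum, hlsum]
      have hsign : (∀ a ∈ l.map (fun g => ((g j : ℤ) : ℝ)), 0 ≤ a) ∨
          (∀ a ∈ l.map (fun g => ((g j : ℤ) : ℝ)), a ≤ 0) := by
        by_cases hzj : 0 ≤ z j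
        · left
          intro a ha
          obtain ⟨g, hgl, rfl⟩ := List.mem_map.mp ha
          have := ((hlmem g hgl).2 j).1 hzj
          exact_mod_cast this.1
        · right
          intro a ha
          obtain ⟨g, hgl, rfl⟩ := List.mem_map.mp ha
          have := ((hlmem g hgl).2 j).2 (by omega)
          exact_mod_cast this.2
      have := graver_list_incr (hconv j) (x0 j : ℝ) (l.map (fun g => ((g j : ℤ) : ℝ))) hsign
      rw [List.map_map, hsum'] at this
      exact this
    have total : (l.map (fun g => (∑ j, f j ((x0 j : ℝ) + (g j : ℝ))) - ∑ j, f j (x0 j : ℝ))).sum ≤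
        (∑ j, f j (x j : ℝ)) - ∑ j, f j (x0 j : ℝ) := by
      have e1 : ∀ g : Fin n → ℤ, (∑ j, f j ((x0 j : ℝ) + (g j : ℝ))) - ∑ j, f j (x0 j : ℝ) =
          ∑ j, (f j ((x0 j : ℝ) + (g j : ℝ)) - f j (x0 j : ℝ)) := by
        intro g; rw [Finset.sum_sub_distrib]
      have e2 : (l.map (fun g => (∑ j, f j ((x0 j : ℝ) + (g j : ℝ))) - ∑ j, f j (x0 j : ℝ))).sum =
          ∑ j, (l.map (fun g => f j ((x0 j : ℝ) + (g j : ℝ)) - f j (x0 j : ℝ))).sum := by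
        rw [show (fun g : Fin n → ℤ => (∑ j, f j ((x0 j : ℝ) + (g j : ℝ))) - ∑ j, f j (x0 j : ℝ)) =
          (fun g : Fin n → ℤ => ∑ j, (f j ((x0 j : ℝ) + (g j : ℝ)) - f j (x0 j : ℝ))) from
          funext e1]
        exact graver_map_sum_comm l _
      rw [e2]
      have e3 : ∀ j : Fin n, (x j : ℝ) = (x0 j : ℝ) + (z j : ℝ) := by
        intro j
        have : z j = x j - x0 j := by rw [hz_def]; rfl
        push_cast [this]; ring
      calc ∑ j, (l.map (fun g => f j ((x0 j : ℝ) + (g j : ℝ)) - f j (x0 j : ℝ))).sum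
          ≤ ∑ j, (f j ((x0 j : ℝ) + (z j : ℝ)) - f j (x0 j : ℝ)) :=
            Finset.sum_le_sum (fun j _ => key j)
        _ = (∑ j, f j (x j : ℝ)) - ∑ j, f j (x0 j : ℝ) := by
            rw [Finset.sum_sub_distrib]
            congr 1
            exact Finset.sum_congr rfl fun j _ => by rw [e3 j]
    have hneg : (l.map (fun g => (∑ j, f j ((x0 j : ℝ) + (g j : ℝ))) - ∑ j, f j (x0 j : ℝ))).sum < 0 :=
      lt_of_le_of_lt total (by linarith)
    have hex : ∃ g ∈ l, (∑ j, f j ((x0 j : ℝ) + (g j : ℝ))) - ∑ j, f j (x0 j : ℝ) < 0 := by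
      by_contra h
      push_neg at h
      have : (0:ℝ) ≤ (l.map (fun g => (∑ j, f j ((x0 j : ℝ) + (g j : ℝ))) - ∑ j, f j (x0 j : ℝ))).sum := by
        apply graver_list_sum_nonneg
        intro a ha
        obtain ⟨g, hgl, rfl⟩ := List.mem_map.mp ha
        exact h g hgl
      linarith
    obtain ⟨g, hgl, hgneg⟩ := hex
    obtain ⟨hgrav, hconf⟩ := hlmem g hgl
    apply hno
    refine ⟨g, hgrav, ⟨?_, ?_⟩, by linarith⟩
    · rw [Matrix.mulVec_add, hx0.1, hgrav.2.1, add_zero]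
    · intro j
      have h1 := hx0.2 j
      have h2 := hx.2 j
      have h3 := hconf j
      have h4 : z j = x j - x0 j := by rw [hz_def]; rfl
      simp only [Pi.add_apply]
      omega
end

section
/- Let C ∈ ℤ^{p×q} be a matrix and let D be the submatrix of C obtained by selecting a subset of columns of C. Then every Graver basis element of D, extended by zeros in the remaining columns of C, is a Graver basis element of C. In particular, |G(D)| ≤ |G(C)|. -/
/-- The Graver set of any integer matrix is finite (via Dickson's lemma). -/
lemma graver_finite {κ ι : Type*} [Fintype κ] [Fintype ι] (D : Matrix κ ι ℤ) :
    {z : ι → ℤ | InGraver D z}.Finite := by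
  classical
  set G := {z : ι → ℤ | InGraver D z}
  set φ : (ι → ℤ) → (ι → ℕ) × (ι → ℕ) :=
    fun z => (fun i => (z i).toNat, fun i => (-z i).toNat) with hφ
  have hinj : Function.Injective φ := by
    intro a b hab
    funext i
    have h1 : (a i).toNat = (b i).toNat := congrFun (congrArg Prod.fst hab) i
    have h2 : (-a i).toNat = (-b i).toNat := congrFun (congrArg Prod.snd hab) i
    omega
  have hpwo : (φ '' G).IsPWO := by
    have h1 : ((Set.univ : Set (ι → ℕ)) ×ˢ (Set.univ : Set (ι → ℕ))).IsPWO :=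
      (Set.isPWO_of_wellQuasiOrderedLE (Set.univ : Set (ι → ℕ))).prod
        (Set.isPWO_of_wellQuasiOrderedLE (Set.univ : Set (ι → ℕ)))
    exact h1.mono (fun x _ => by simp)
  have hanti : IsAntichain (· ≤ ·) (φ '' G) := by
    rintro _ ⟨z1, hz1, rfl⟩ _ ⟨z2, hz2, rfl⟩ hne hle
    obtain ⟨hle1, hle2⟩ := hle
    have hzne : z1 ≠ z2 := fun h => hne (by rw [h])
    obtain ⟨hz2ne, hz2ker, hz2ind⟩ := hz2
    apply hz2ind
    refine ⟨z1, z2 - z1, hz1.1, sub_ne_zero.mpr (Ne.symm hzne), hz1.2.1, ?_, ?_, by ring⟩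
    · rw [Matrix.mulVec_sub, hz2ker, hz1.2.1, sub_zero]
    · intro j
      have h1 : (z1 j).toNat ≤ (z2 j).toNat := hle1 j
      have h2 : (-z1 j).toNat ≤ (-z2 j).toNat := hle2 j
      simp only [Pi.sub_apply]
      rcases lt_trichotomy (z1 j) 0 with h | h | h
      · have : z2 j ≤ z1 j := by omega
        nlinarith
      · simp [h]
      · have : z1 j ≤ z2 j := by omega
        exact mul_nonneg h.le (by linarith)
  have : (φ '' G).Finite := hanti.finite_of_partiallyWellOrderedOn hpwo
  exact (this.preimage hinj.injOn).subset (Set.subset_preimage_image φ G)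

lemma mulVec_extend_eq {p q q' : ℕ} (C : Matrix (Fin p) (Fin q) ℤ) (e : Fin q' → Fin q)
    (he : Function.Injective e) (w : Fin q → ℤ) (hw : ∀ i, i ∉ Set.range e → w i = 0) :
    C.mulVec w = (C.submatrix id e).mulVec (w ∘ e) := by
  classical
  funext j
  simp only [Matrix.mulVec, dotProduct, Matrix.submatrix_apply, id_eq,
    Function.comp_apply]
  rw [← Finset.sum_image (s := Finset.univ) (g := e) (f := fun i => C j i * w i)
    (fun a _ b _ h => he h)]
  refine (Finset.sum_subset (Finset.subset_univ _) ?_).symm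
  intro i _ hi
  have : i ∉ Set.range e := by
    intro ⟨a, ha⟩
    exact hi (Finset.mem_image.mpr ⟨a, Finset.mem_univ _, ha⟩)
  rw [hw i this, mul_zero]

/-- Graver basis elements of a column submatrix extend by zeros to Graver basis
elements of the full matrix; in particular the Graver basis can only get larger. -/
theorem graver_of_column_submatrix
    (p q q' : ℕ) (C : Matrix (Fin p) (Fin q) ℤ) (e : Fin q' → Fin q)
    (he : Function.Injective e) :
    (∀ z : Fin q' → ℤ, InGraver (C.submatrix id e) z →
      InGraver C (Function.extend e z (fun _ => (0 : ℤ)))) ∧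
    {z : Fin q' → ℤ | InGraver (C.submatrix id e) z}.ncard ≤
      {z : Fin q → ℤ | InGraver C z}.ncard := by
  classical
  have key : ∀ z : Fin q' → ℤ, InGraver (C.submatrix id e) z →
      InGraver C (Function.extend e z (fun _ => (0 : ℤ))) := by
    intro z ⟨hzne, hzker, hzind⟩
    set E := Function.extend e z (fun _ => (0 : ℤ)) with hE
    have hEe : ∀ i', E (e i') = z i' := fun i' => he.extend_apply z _ i'
    have hEz : ∀ i, i ∉ Set.range e → E i = 0 := by
      intro i hi
      exact Function.extend_apply' z _ i (fun ⟨a, ha⟩ => hi ⟨a, ha⟩)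
    refine ⟨?_, ?_, ?_⟩
    · intro h
      apply hzne
      funext i'
      have := congrFun h (e i')
      rwa [hEe i'] at this
    · rw [mulVec_extend_eq C e he E hEz]
      have : E ∘ e = z := funext hEe
      rw [this, hzker]
    · rintro ⟨u, v, hu, hv, hCu, hCv, hsign, heq⟩
      -- off the range of e, u and v vanish
      have hzero : ∀ i, i ∉ Set.range e → u i = 0 ∧ v i = 0 := by
        intro i hi
        have h0 : u i + v i = 0 := by
          have := congrFun heq i
          rw [hEz i hi] at this
          exact this.symm
        have := hsign i
        constructor <;> nlinarith [sq_nonneg (u i), sq_nonneg (v i)]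
      apply hzind
      refine ⟨u ∘ e, v ∘ e, ?_, ?_, ?_, ?_, fun j => hsign (e j), ?_⟩
      · intro h
        apply hu
        funext i
        by_cases hi : i ∈ Set.range e
        · obtain ⟨a, rfl⟩ := hi
          exact congrFun h a
        · exact (hzero i hi).1
      · intro h
        apply hv
        funext i
        by_cases hi : i ∈ Set.range e
        · obtain ⟨a, rfl⟩ := hi
          exact congrFun h a
        · exact (hzero i hi).2
      · rw [← mulVec_extend_eq C e he u (fun i hi => (hzero i hi).1), hCu]
      · rw [← mulVec_extend_eq C e he v (fun i hi => (hzero i hi).2), hCv]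
      · funext i'
        have := congrFun heq (e i')
        rw [hEe i'] at this
        exact this
  refine ⟨key, ?_⟩
  have hfin := graver_finite C
  have himg : (Function.extend e · (fun _ => (0 : ℤ))) ''
      {z : Fin q' → ℤ | InGraver (C.submatrix id e) z} ⊆ {z : Fin q → ℤ | InGraver C z} := by
    rintro _ ⟨z, hz, rfl⟩
    exact key z hz
  have hexinj : Function.Injective (fun z : Fin q' → ℤ =>
      Function.extend e z (fun _ => (0 : ℤ))) := by
    intro a b hab
    funext i'
    have := congrFun hab (e i')
    simpa only [he.extend_apply] using this
  calc {z : Fin q' → ℤ | InGraver (C.submatrix id e) z}.ncard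
      = ((Function.extend e · (fun _ => (0 : ℤ))) ''
        {z : Fin q' → ℤ | InGraver (C.submatrix id e) z}).ncard :=
        (Set.ncard_image_of_injective _ hexinj).symm
    _ ≤ {z : Fin q → ℤ | InGraver C z}.ncard := Set.ncard_le_ncard himg hfin
end

section
/- For fixed A ∈ ℤ^{d×n} and B ∈ ℤ^{m×n}, the sizes and encoding lengths of the Graver bases of the matrices [A,B]^(N), for N = 1, 2, …, eventually stabilize in the following sense: there exists a Graver complexity g(A,B) such that every Graver basis element of [A,B]^(N) has at most g(A,B) nonzero bricks (nonzero components x^i ∈ ℤ^n among the N bricks), independent of N. -/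
/-- The `N`-fold matrix `[A,B]⁽ᴺ⁾`: `N` copies of `B` in a top row block and `N`
diagonal copies of `A` below. -/
def Nfold {d n m : ℕ} (A : Matrix (Fin d) (Fin n) ℤ) (B : Matrix (Fin m) (Fin n) ℤ)
    (N : ℕ) : Matrix (Fin m ⊕ Fin N × Fin d) (Fin N × Fin n) ℤ :=
  fun r c =>
    match r, c with
    | Sum.inl r, (_, j) => B r j
    | Sum.inr (i', r), (i, j) => if i' = i then A r j else 0

/-- A crude binary-free encoding length of an integer vector. -/
def encLen {ι : Type*} [Fintype ι] (z : ι → ℤ) : ℕ := ∑ j, ((z j).natAbs + 1)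

section aux
variable {n : ℕ}

/-- sign-compatibility of integer vectors -/
def SC {n : ℕ} (u v : Fin n → ℤ) : Prop := ∀ j, 0 ≤ u j * v j

lemma sc_symm {u v : Fin n → ℤ} (h : SC u v) : SC v u := fun j => by
  rw [mul_comm]; exact h j

lemma sign_cases {a b : ℤ} (h : 0 ≤ a * b) : (0 ≤ a ∧ 0 ≤ b) ∨ (a ≤ 0 ∧ b ≤ 0) := by
  rcases le_or_gt 0 a with ha | ha
  · rcases le_or_gt 0 b with hb | hb
    · exact Or.inl ⟨ha, hb⟩
    · have : a ≤ 0 := by nlinarith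
      exact Or.inr ⟨this, hb.le⟩
  · rcases le_or_gt 0 b with hb | hb
    · have : b ≤ 0 := by nlinarith
      exact Or.inr ⟨ha.le, this⟩
    · exact Or.inr ⟨ha.le, hb.le⟩

lemma list_sum_apply (l : List (Fin n → ℤ)) (j : Fin n) :
    l.sum j = (l.map (fun g => g j)).sum := by
  induction l with
  | nil => rfl
  | cons a t ih => simp [ih]

lemma list_sum_nonpos {l : List ℤ} (h : ∀ a ∈ l, a ≤ 0) : l.sum ≤ 0 := by
  induction l with
  | nil => simp
  | cons a t ih =>
    simp only [List.sum_cons]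
    have h1 := h a (List.mem_cons_self)
    have h2 := ih (fun b hb => h b (List.mem_cons_of_mem _ hb))
    omega

lemma int_dichotomy (l : List ℤ) (h : l.Pairwise fun a b => 0 ≤ a * b) :
    (∀ a ∈ l, 0 ≤ a) ∨ (∀ a ∈ l, a ≤ 0) := by
  by_cases hp : ∃ a ∈ l, 0 < a
  · obtain ⟨a, ha, hpos⟩ := hp
    left
    intro b hb
    by_contra hbneg
    push_neg at hbneg
    have hne : a ≠ b := by intro e; omega
    have hs : Symmetric fun a b : ℤ => 0 ≤ a * b := fun x y hxy =>
      show (0:ℤ) ≤ y * x by rw [mul_comm]; exact hxy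
    haveI : Std.Symm fun a b : ℤ => 0 ≤ a * b := ⟨fun x y hxy => hs hxy⟩
    have := h.forall ha hb hne
    nlinarith
  · push_neg at hp
    exact Or.inr hp

lemma sum_zero_all_zero {l : List ℤ} (h : ∀ a ∈ l, 0 ≤ a) (hs : l.sum = 0) :
    ∀ a ∈ l, a = 0 :=
  fun a ha => le_antisymm (hs ▸ List.single_le_sum h a ha) (h a ha)

lemma sum_zero_all_zero_nonpos {l : List ℤ} (h : ∀ a ∈ l, a ≤ 0) (hs : l.sum = 0) :
    ∀ a ∈ l, a = 0 := by
  have h2 : ∀ a ∈ l.map (fun x : ℤ => -x), 0 ≤ a := by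
    intro a ha
    obtain ⟨b, hb, rfl⟩ := List.mem_map.mp ha
    have := h b hb; omega
  have hneg : ∀ l' : List ℤ, (l'.map (fun x : ℤ => -x)).sum = -l'.sum := by
    intro l'
    induction l' with
    | nil => simp
    | cons a t ih => simp [ih]; ring
  have hneg := hneg l
  have hs2 : (l.map (fun x : ℤ => -x)).sum = 0 := by rw [hneg, hs, neg_zero]
  intro a ha
  have := sum_zero_all_zero h2 hs2 (-a) (List.mem_map_of_mem ha)
  omega

lemma sc_split {l s t : List (Fin n → ℤ)} (hp : l.Pairwise SC) (hperm : (s ++ t).Perm l) :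
    SC s.sum t.sum := by
  have hp2 : (s ++ t).Pairwise SC :=
    (List.Perm.pairwise_iff (fun h => sc_symm h) hperm).mpr hp
  intro j
  have hcoord : ((s ++ t).map (fun g => g j)).Pairwise (fun a b : ℤ => 0 ≤ a * b) :=
    hp2.map _ (fun a b hab => hab j)
  rw [List.map_append] at hcoord
  rcases int_dichotomy _ hcoord with h1 | h1
  · have hs : 0 ≤ s.sum j := by
      rw [list_sum_apply]
      exact List.sum_nonneg (fun x hx => h1 x (List.mem_append_left _ hx))
    have ht : 0 ≤ t.sum j := by
      rw [list_sum_apply]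
      exact List.sum_nonneg (fun x hx => h1 x (List.mem_append_right _ hx))
    exact mul_nonneg hs ht
  · have hs : s.sum j ≤ 0 := by
      rw [list_sum_apply]
      exact list_sum_nonpos (fun x hx => h1 x (List.mem_append_left _ hx))
    have ht : t.sum j ≤ 0 := by
      rw [list_sum_apply]
      exact list_sum_nonpos (fun x hx => h1 x (List.mem_append_right _ hx))
    nlinarith

lemma sc_sum_ne_zero {l : List (Fin n → ℤ)} (hp : l.Pairwise SC)
    (hnz : ∀ g ∈ l, g ≠ 0) {a : Fin n → ℤ} (ha : a ∈ l) : l.sum ≠ 0 := by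
  classical
  have hperm : l.Perm (a :: l.erase a) := List.perm_cons_erase ha
  have hsc : SC a (l.erase a).sum := by
    have : (([a] ++ l.erase a) : List (Fin n → ℤ)).Perm l := by
      simpa using hperm.symm
    simpa using sc_split hp this
  obtain ⟨j, hj⟩ : ∃ j, a j ≠ 0 := by
    by_contra h; push_neg at h; exact hnz a ha (funext h)
  intro h0
  have hsum : l.sum = a + (l.erase a).sum := by rw [hperm.sum_eq]; simp
  have hz : a j + (l.erase a).sum j = 0 := by
    have := congrFun h0 j
    rw [hsum] at this
    simpa using this
  have hmul := hsc j
  rcases lt_trichotomy (a j) 0 with h | h | h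
  · nlinarith
  · exact hj h
  · nlinarith

lemma cross_sc {u v : Fin n → ℤ} {lu lv : List (Fin n → ℤ)}
    (hu : lu.Pairwise SC) (hv : lv.Pairwise SC)
    (hsu : lu.sum = u) (hsv : lv.sum = v) (huv : ∀ j, 0 ≤ u j * v j)
    {g h : Fin n → ℤ} (hg : g ∈ lu) (hh : h ∈ lv) : SC g h := by
  intro j
  have hdu := int_dichotomy (lu.map (fun g => g j)) (hu.map _ fun a b hab => hab j)
  have hdv := int_dichotomy (lv.map (fun g => g j)) (hv.map _ fun a b hab => hab j)
  have hgj : g j ∈ lu.map (fun g => g j) := List.mem_map_of_mem hg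
  have hhj : h j ∈ lv.map (fun g => g j) := List.mem_map_of_mem hh
  have hsuj : u j = (lu.map (fun g => g j)).sum := by rw [← hsu, list_sum_apply]
  have hsvj : v j = (lv.map (fun g => g j)).sum := by rw [← hsv, list_sum_apply]
  rcases hdu with h1 | h1 <;> rcases hdv with h2 | h2
  · exact mul_nonneg (h1 _ hgj) (h2 _ hhj)
  · -- lu nonneg, lv nonpos
    have hu0 : 0 ≤ u j := by rw [hsuj]; exact List.sum_nonneg h1
    have hv0 : v j ≤ 0 := by rw [hsvj]; exact list_sum_nonpos h2
    have hz : u j = 0 ∨ v j = 0 := by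
      have := huv j
      rcases lt_or_eq_of_le hu0 with h' | h'
      · right; nlinarith
      · left; exact h'.symm
    rcases hz with hz | hz
    · have : g j = 0 := sum_zero_all_zero h1 (by rw [← hsuj, hz]) _ hgj
      simp [this]
    · have : h j = 0 := sum_zero_all_zero_nonpos h2 (by rw [← hsvj, hz]) _ hhj
      simp [this]
  · -- lu nonpos, lv nonneg
    have hu0 : u j ≤ 0 := by rw [hsuj]; exact list_sum_nonpos h1
    have hv0 : 0 ≤ v j := by rw [hsvj]; exact List.sum_nonneg h2
    have hz : u j = 0 ∨ v j = 0 := by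
      have := huv j
      rcases lt_or_eq_of_le hv0 with h' | h'
      · left; nlinarith
      · right; exact h'.symm
    rcases hz with hz | hz
    · have : g j = 0 := sum_zero_all_zero_nonpos h1 (by rw [← hsuj, hz]) _ hgj
      simp [this]
    · have : h j = 0 := sum_zero_all_zero h2 (by rw [← hsvj, hz]) _ hhj
      simp [this]
  · nlinarith [h1 _ hgj, h2 _ hhj]

/-- ℓ1 norm -/
def l1 {n : ℕ} (x : Fin n → ℤ) : ℕ := ∑ j, (x j).natAbs

lemma l1_add_of_sc {u v : Fin n → ℤ} (h : SC u v) : l1 (u + v) = l1 u + l1 v := by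
  unfold l1
  rw [← Finset.sum_add_distrib]
  refine Finset.sum_congr rfl fun j _ => ?_
  rcases sign_cases (h j) with ⟨h1, h2⟩ | ⟨h1, h2⟩ <;> (simp only [Pi.add_apply]; omega)

lemma l1_pos {x : Fin n → ℤ} (hx : x ≠ 0) : 0 < l1 x := by
  obtain ⟨j, hj⟩ : ∃ j, x j ≠ 0 := by
    by_contra h; push_neg at h; exact hx (funext h)
  unfold l1
  exact lt_of_lt_of_le (by omega : 0 < (x j).natAbs)
    (Finset.single_le_sum (f := fun i => (x i).natAbs) (fun i _ => Nat.zero_le _)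
      (Finset.mem_univ j))

lemma l1_eq_zero {x : Fin n → ℤ} (hx : l1 x = 0) : x = 0 := by
  funext j
  have := Finset.sum_eq_zero_iff.mp hx j (Finset.mem_univ j)
  simpa [Int.natAbs_eq_zero] using this

variable {d : ℕ}

lemma decomp_aux (A : Matrix (Fin d) (Fin n) ℤ) :
    ∀ (k : ℕ) (x : Fin n → ℤ), l1 x ≤ k → A.mulVec x = 0 →
      ∃ l : List (Fin n → ℤ), (∀ g ∈ l, InGraver A g) ∧ l.Pairwise SC ∧ l.sum = x := by
  intro k
  induction k with
  | zero =>
    intro x hx _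
    have : x = 0 := l1_eq_zero (Nat.le_zero.mp hx)
    exact ⟨[], by simp, List.Pairwise.nil, by simp [this]⟩
  | succ k ih =>
    intro x hx hker
    by_cases hx0 : x = 0
    · exact ⟨[], by simp, List.Pairwise.nil, by simp [hx0]⟩
    by_cases hg : InGraver A x
    · exact ⟨[x], by simp [hg], List.pairwise_singleton _ _, by simp⟩
    · have hex : ∃ u v : Fin n → ℤ, u ≠ 0 ∧ v ≠ 0 ∧ A.mulVec u = 0 ∧ A.mulVec v = 0 ∧
          (∀ j, 0 ≤ u j * v j) ∧ x = u + v := by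
        by_contra hc; exact hg ⟨hx0, hker, hc⟩
      obtain ⟨u, v, hu0, hv0, hku, hkv, hsc, hxuv⟩ := hex
      have hl1 : l1 u + l1 v = l1 x := by rw [hxuv, l1_add_of_sc hsc]
      have h1u : l1 u ≤ k := by have := l1_pos hv0; omega
      have h1v : l1 v ≤ k := by have := l1_pos hu0; omega
      obtain ⟨lu, hlu1, hlu2, hlu3⟩ := ih u h1u hku
      obtain ⟨lv, hlv1, hlv2, hlv3⟩ := ih v h1v hkv
      refine ⟨lu ++ lv, ?_, ?_, by rw [List.sum_append, hlu3, hlv3, hxuv]⟩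
      · intro g hgm
        rcases List.mem_append.mp hgm with h | h
        exacts [hlu1 g h, hlv1 g h]
      · exact List.pairwise_append.mpr
          ⟨hlu2, hlv2, fun a haa b hbb => cross_sc hlu2 hlv2 hlu3 hlv3 hsc haa hbb⟩

lemma decomp (A : Matrix (Fin d) (Fin n) ℤ) (x : Fin n → ℤ) (hker : A.mulVec x = 0) :
    ∃ l : List (Fin n → ℤ), (∀ g ∈ l, InGraver A g) ∧ l.Pairwise SC ∧ l.sum = x :=
  decomp_aux A (l1 x) x le_rfl hker

end aux

section finiteness
variable {n d : ℕ}

/-- encode an integer vector by its positive and negative parts -/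
def phiPN {n : ℕ} (x : Fin n → ℤ) : (Fin n ⊕ Fin n) → ℕ :=
  Sum.elim (fun j => (x j).toNat) (fun j => (-x j).toNat)

lemma phiPN_inj : Function.Injective (phiPN (n := n)) := by
  intro x y h
  funext j
  have h1 := congrFun h (Sum.inl j)
  have h2 := congrFun h (Sum.inr j)
  simp only [phiPN, Sum.elim_inl, Sum.elim_inr] at h1 h2
  omega

lemma grav_finite (A : Matrix (Fin d) (Fin n) ℤ) : {g : Fin n → ℤ | InGraver A g}.Finite := by
  set S := {g : Fin n → ℤ | InGraver A g} with hS
  have key : ∀ g ∈ S, ∀ h ∈ S, phiPN g ≤ phiPN h → g = h := by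
    intro g hg h hh hle
    by_contra hne
    have hcomp : ∀ j, (0 < g j → g j ≤ h j) ∧ (g j < 0 → h j ≤ g j) := by
      intro j
      have h1 : (g j).toNat ≤ (h j).toNat := hle (Sum.inl j)
      have h2 : (-g j).toNat ≤ (-h j).toNat := hle (Sum.inr j)
      constructor <;> intro <;> omega
    apply hh.2.2
    refine ⟨g, h - g, hg.1, sub_ne_zero.mpr (fun e => hne e.symm), hg.2.1, ?_, ?_, by ring⟩
    · rw [Matrix.mulVec_sub, hg.2.1, hh.2.1, sub_zero]
    · intro j
      have hc := hcomp j
      simp only [Pi.sub_apply]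
      rcases lt_trichotomy (g j) 0 with h' | h' | h'
      · have := hc.2 h'; nlinarith
      · simp [h']
      · have := hc.1 h'; nlinarith
  have hanti : IsAntichain (· ≤ ·) (phiPN '' S) := by
    rintro _ ⟨g, hg, rfl⟩ _ ⟨h, hh, rfl⟩ hne hle
    exact hne (congrArg phiPN (key g hg h hh hle))
  have hpwo : (phiPN '' S).IsPWO :=
    Set.isPWO_of_wellQuasiOrderedLE (phiPN '' S)
  have hfin : (phiPN '' S).Finite :=
    hanti.finite_of_partiallyWellOrderedOn hpwo
  exact Set.Finite.of_finite_image hfin (phiPN_inj.injOn)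

end finiteness

section counting
variable {n : ℕ}

lemma count_smul_sum {S : Set (Fin n → ℤ)} [Fintype ↥S] {M : Type*} [AddCommMonoid M]
    (f : (Fin n → ℤ) → M) (l : List (Fin n → ℤ)) (hl : ∀ a ∈ l, a ∈ S) :
    (l.map f).sum = ∑ g : ↥S, (l.count ↑g) • f ↑g := by
  classical
  induction l with
  | nil => simp
  | cons a t ih =>
    have ha : a ∈ S := hl a (List.mem_cons_self)
    have ht := fun b hb => hl b (List.mem_cons_of_mem _ hb)
    simp only [List.map_cons, List.sum_cons, ih ht]
    have key : ∀ g : ↥S, (List.count (↑g : Fin n → ℤ) (a :: t)) • f ↑g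
        = (t.count ↑g) • f ↑g + (if (⟨a, ha⟩ : ↥S) = g then f ↑g else 0) := by
      intro g
      rw [List.count_cons]
      by_cases hag : a = (g : Fin n → ℤ)
      · have he : (⟨a, ha⟩ : ↥S) = g := Subtype.ext hag
        simp [hag, he, add_smul]
      · have he : (⟨a, ha⟩ : ↥S) ≠ g := fun e => hag (congrArg Subtype.val e)
        simp [hag, he]
    rw [Finset.sum_congr rfl (fun g _ => key g), Finset.sum_add_distrib]
    rw [Finset.sum_ite_eq Finset.univ (⟨a, ha⟩ : ↥S) (fun g => f ↑g)]
    simp [add_comm]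

lemma count_length {S : Set (Fin n → ℤ)} [Fintype ↥S]
    (l : List (Fin n → ℤ)) (hl : ∀ a ∈ l, a ∈ S) :
    ∑ g : ↥S, l.count ↑g = l.length := by
  have h1 := count_smul_sum (S := S) (M := ℕ) (fun _ => 1) l hl
  simp only [smul_eq_mul, mul_one] at h1
  rw [← h1]
  have hlen : ∀ l' : List (Fin n → ℤ), (l'.map fun _ => (1 : ℕ)).sum = l'.length := by
    intro l'
    induction l' with
    | nil => simp
    | cons a t ih => simp [ih, add_comm]
  exact hlen l

lemma mulVec_list_sum {d : ℕ} (D : Matrix (Fin d) (Fin n) ℤ) (l : List (Fin n → ℤ)) :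
    D.mulVec l.sum = (l.map D.mulVec).sum := by
  induction l with
  | nil => simp [Matrix.mulVec_zero]
  | cons a t ih => simp [Matrix.mulVec_add, ih]

lemma select {β : Type*} :
    ∀ (l : List (β × (Fin n → ℤ))) (w : (Fin n → ℤ) → ℕ),
      (∀ g, w g ≤ (l.map Prod.snd).count g) →
      ∃ s t : List (β × (Fin n → ℤ)), (s ++ t).Perm l ∧
        ∀ g, ((s.map Prod.snd).count g) = w g := by
  classical
  intro l
  induction l with
  | nil =>
    intro w hw
    refine ⟨[], [], by simp, fun g => ?_⟩
    have := hw g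
    simp only [List.map_nil, List.count_nil, Nat.le_zero] at this
    simp [this]
  | cons p l ih =>
    intro w hw
    by_cases hpos : 0 < w p.2
    · set w' := Function.update w p.2 (w p.2 - 1) with hw'def
      have hw' : ∀ g, w' g ≤ (l.map Prod.snd).count g := by
        intro g
        have hg1 := hw g
        by_cases hg : g = p.2
        · subst hg
          rw [hw'def]
          simp only [Function.update_self]
          simp only [List.map_cons, List.count_cons, beq_iff_eq, if_true, if_pos rfl] at hg1
          omega
        · rw [hw'def, Function.update_of_ne hg]
          simp only [List.map_cons, List.count_cons, beq_iff_eq, if_true, if_pos rfl] at hg1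
          have : ¬ (p.2 = g) := fun e => hg e.symm
          simp [this] at hg1
          omega
      obtain ⟨s, t, hperm, hcount⟩ := ih w' hw'
      refine ⟨p :: s, t, ?_, ?_⟩
      · simpa using hperm.cons p
      · intro g
        by_cases hg : g = p.2
        · subst hg
          simp only [List.map_cons, List.count_cons, beq_iff_eq, if_pos rfl]
          rw [hcount p.2, hw'def]
          simp only [Function.update_self, if_true, if_pos rfl]
          omega
        · simp only [List.map_cons, List.count_cons, beq_iff_eq]
          have : ¬ (p.2 = g) := fun e => hg e.symm
          rw [if_neg this, hcount g, hw'def, Function.update_of_ne hg]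
          omega
    · have hz : w p.2 = 0 := by omega
      have hw0 : ∀ g, w g ≤ (l.map Prod.snd).count g := by
        intro g
        have hg1 := hw g
        by_cases hg : g = p.2
        · subst hg; rw [hz]; exact Nat.zero_le _
        · simp only [List.map_cons, List.count_cons, beq_iff_eq, if_true, if_pos rfl] at hg1
          have : ¬ (p.2 = g) := fun e => hg e.symm
          simp [this] at hg1
          omega
      obtain ⟨s, t, hperm, hcount⟩ := ih w hw0
      refine ⟨s, p :: t, ?_, hcount⟩
      exact (List.perm_middle).trans (hperm.cons p)

lemma filter_sum_parts {N : ℕ} {M : Type*} [AddCommMonoid M]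
    (f : Fin N × (Fin n → ℤ) → M) :
    ∀ (s : List (Fin N × (Fin n → ℤ))),
      ∑ i : Fin N, ((s.filter (fun p => p.1 = i)).map f).sum = (s.map f).sum := by
  intro s
  induction s with
  | nil => simp
  | cons p s ih =>
    have key : ∀ i : Fin N, (((p :: s).filter (fun q => q.1 = i)).map f).sum
        = (if p.1 = i then f p else 0) + ((s.filter (fun q => q.1 = i)).map f).sum := by
      intro i
      by_cases h : p.1 = i <;> simp [List.filter_cons, h]
    rw [Finset.sum_congr rfl (fun i _ => key i), Finset.sum_add_distrib, ih]
    rw [Finset.sum_ite_eq Finset.univ p.1 (fun _ => f p)]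
    simp

lemma flatten_ite {α ι : Type*} [DecidableEq ι] (b : List α) (i : ι) :
    ∀ (l : List ι), l.Nodup → i ∈ l →
      (l.map fun i' => if i' = i then b else []).flatten = b := by
  intro l
  induction l with
  | nil => simp
  | cons a t ih =>
    intro hnd hmem
    rcases List.mem_cons.mp hmem with h | h
    · rw [List.map_cons, if_pos h.symm, List.flatten_cons]
      have hrest : ∀ x ∈ t.map fun i' => if i' = i then b else [], x = [] := by
        intro x hx
        obtain ⟨i', hi', rfl⟩ := List.mem_map.mp hx
        exact if_neg (fun e => (List.nodup_cons.mp hnd).1 (by rw [← h, ← e]; exact hi'))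
      rw [List.flatten_eq_nil_iff.mpr hrest, List.append_nil]
    · have hne : a ≠ i := fun e => (List.nodup_cons.mp hnd).1 (e ▸ h)
      rw [List.map_cons, if_neg hne, List.flatten_cons, List.nil_append]
      exact ih (List.nodup_cons.mp hnd).2 h

end counting

section nfoldker

variable {d n m : ℕ}

lemma nfold_mulVec_inl (A : Matrix (Fin d) (Fin n) ℤ) (B : Matrix (Fin m) (Fin n) ℤ)
    {N : ℕ} (z : Fin N × Fin n → ℤ) (r : Fin m) :
    (Nfold A B N).mulVec z (Sum.inl r) = ∑ i, B.mulVec (fun j => z (i, j)) r := by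
  simp [Matrix.mulVec, dotProduct, Nfold, Fintype.sum_prod_type]

lemma nfold_mulVec_inr (A : Matrix (Fin d) (Fin n) ℤ) (B : Matrix (Fin m) (Fin n) ℤ)
    {N : ℕ} (z : Fin N × Fin n → ℤ) (i : Fin N) (r : Fin d) :
    (Nfold A B N).mulVec z (Sum.inr (i, r)) = A.mulVec (fun j => z (i, j)) r := by
  simp only [Matrix.mulVec, dotProduct, Nfold, Fintype.sum_prod_type, ite_mul, zero_mul]
  have key : ∀ i' : Fin N, (∑ j, if i = i' then A r j * z (i', j) else 0)
      = if i = i' then ∑ j, A r j * z (i', j) else 0 := by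
    intro i'; split <;> simp
  rw [Finset.sum_congr rfl fun i' _ => key i', Finset.sum_ite_eq]
  simp

lemma nfold_ker (A : Matrix (Fin d) (Fin n) ℤ) (B : Matrix (Fin m) (Fin n) ℤ)
    {N : ℕ} (z : Fin N × Fin n → ℤ) :
    (Nfold A B N).mulVec z = 0 ↔
      (∀ i, A.mulVec (fun j => z (i, j)) = 0) ∧
        (∑ i, B.mulVec (fun j => z (i, j))) = 0 := by
  constructor
  · intro h
    refine ⟨fun i => funext fun r => ?_, funext fun r => ?_⟩
    · rw [← nfold_mulVec_inr A B z i r]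
      exact congrFun h _
    · rw [Finset.sum_apply, ← nfold_mulVec_inl A B z r]
      exact congrFun h _
  · rintro ⟨h1, h2⟩
    funext r
    rcases r with r | ⟨i, r⟩
    · rw [nfold_mulVec_inl A B z r]
      have := congrFun h2 r
      rw [Finset.sum_apply] at this
      simpa using this
    · rw [nfold_mulVec_inr A B z i r]
      have := congrFun (h1 i) r
      simpa using this

end nfoldker

/-- Graver complexity: there is a constant `g(A,B)` such that every Graver basis
element of `[A,B]⁽ᴺ⁾` has at most `g(A,B)` nonzero bricks, independent of `N`. -/
theorem nfold_graver_complexity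
    (d n m : ℕ) (A : Matrix (Fin d) (Fin n) ℤ) (B : Matrix (Fin m) (Fin n) ℤ) :
    ∃ g : ℕ, ∀ (N : ℕ) (z : (Fin N × Fin n) → ℤ), InGraver (Nfold A B N) z →
      {i : Fin N | ∃ j, z (i, j) ≠ 0}.ncard ≤ g := by
  classical
  set S : Set (Fin n → ℤ) := {g | InGraver A g} with hSdef
  have hSfin : S.Finite := grav_finite A
  haveI : Fintype ↥S := hSfin.fintype
  set K : Set (↥S → ℕ) := {w | w ≠ 0 ∧ ∑ g : ↥S, (w g) • B.mulVec ↑g = 0} with hKdef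
  set Mset : Set (↥S → ℕ) := {w | w ∈ K ∧ ∀ w' ∈ K, w' ≤ w → w' = w} with hMdef
  have hManti : IsAntichain (· ≤ ·) Mset := by
    intro a ha b hb hne hle
    exact hne (hb.2 a ha.1 hle)
  have hMpwo : Mset.IsPWO :=
    Set.isPWO_of_wellQuasiOrderedLE Mset
  have hMfin : Mset.Finite := hManti.finite_of_partiallyWellOrderedOn hMpwo
  obtain ⟨gbound, hgbound⟩ : ∃ g : ℕ, ∀ w ∈ Mset, (∑ x : ↥S, w x) ≤ g := by
    obtain ⟨g, hg⟩ := (hMfin.image (fun w => ∑ x : ↥S, w x)).bddAbove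
    exact ⟨g, fun w hw => hg (Set.mem_image_of_mem _ hw)⟩
  refine ⟨gbound, ?_⟩
  intro N z hz
  have hker := (nfold_ker A B z).mp hz.2.1
  have hkerA : ∀ i, A.mulVec (fun j => z (i, j)) = 0 := hker.1
  have hkerB : (∑ i, B.mulVec (fun j => z (i, j))) = 0 := hker.2
  have hdec : ∀ i, ∃ l : List (Fin n → ℤ),
      (∀ g ∈ l, InGraver A g) ∧ l.Pairwise SC ∧ l.sum = (fun j => z (i, j)) :=
    fun i => decomp A (fun j => z (i, j)) (hkerA i)
  choose L hL1 hL2 hL3 using hdec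
  have hmemS : ∀ i, ∀ a ∈ L i, a ∈ S := fun i a ha => hL1 i a ha
  set v : ↥S → ℕ := fun g => ∑ i, (L i).count ↑g with hvdef
  have hBsum : ∀ i, B.mulVec (fun j => z (i, j))
      = ∑ g : ↥S, ((L i).count ↑g) • B.mulVec ↑g := by
    intro i
    rw [← hL3 i, mulVec_list_sum]
    exact count_smul_sum (S := S) (B.mulVec) (L i) (hmemS i)
  have hvK : v ∈ K := by
    constructor
    · obtain ⟨p, hp⟩ : ∃ p : Fin N × Fin n, z p ≠ 0 := by
        by_contra h; push_neg at h; exact hz.1 (funext h)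
      have hLne : L p.1 ≠ [] := by
        intro e
        apply hp
        have := congrFun (hL3 p.1) p.2
        rw [e] at this
        simpa using this.symm
      obtain ⟨a, ha⟩ := List.exists_mem_of_ne_nil _ hLne
      intro hv0
      have h0 : v ⟨a, hmemS p.1 a ha⟩ = 0 := congrFun hv0 _
      have hcpos : 0 < (L p.1).count a := List.count_pos_iff.mpr ha
      have hc0 : (L p.1).count a = 0 := by
        have := Finset.sum_eq_zero_iff.mp h0 p.1 (Finset.mem_univ p.1)
        simpa using this
      omega
    · calc ∑ g : ↥S, v g • B.mulVec ↑g
          = ∑ g : ↥S, ∑ i, ((L i).count ↑g) • B.mulVec ↑g := by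
            refine Finset.sum_congr rfl fun g _ => ?_
            rw [hvdef, Finset.sum_smul]
      _ = ∑ i, ∑ g : ↥S, ((L i).count ↑g) • B.mulVec ↑g := Finset.sum_comm
      _ = ∑ i, B.mulVec (fun j => z (i, j)) :=
            Finset.sum_congr rfl fun i _ => (hBsum i).symm
      _ = 0 := hkerB
  -- minimality of v
  have hvmin : v ∈ Mset := by
    refine ⟨hvK, ?_⟩
    by_contra hmin
    push_neg at hmin
    obtain ⟨w, hwK, hwle, hwne⟩ := hmin
    -- tagged list of all pieces
    set T : List (Fin N × (Fin n → ℤ)) :=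
      ((List.finRange N).map fun i => (L i).map fun g => (i, g)).flatten with hTdef
    have hinner : ∀ i : Fin N, (List.map Prod.snd ((L i).map fun g => (i, g))) = L i := by
      intro i
      rw [List.map_map]
      exact List.map_id _
    have hTcount : ∀ g : Fin n → ℤ, (T.map Prod.snd).count g = ∑ i, (L i).count g := by
      intro g
      rw [hTdef, List.map_flatten, List.map_map, List.count_flatten, List.map_map,
        Fin.sum_univ_def]
      congr 1
      apply List.map_congr_left
      intro i _
      simp only [Function.comp_apply]
      rw [hinner i]
    have hTmem : ∀ p ∈ T, p.2 ∈ L p.1 := by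
      intro p hp
      rw [hTdef] at hp
      obtain ⟨lb, hlb, hplb⟩ := List.mem_flatten.mp hp
      obtain ⟨i, _, rfl⟩ := List.mem_map.mp hlb
      obtain ⟨g, hg, rfl⟩ := List.mem_map.mp hplb
      exact hg
    have hTfilter : ∀ i : Fin N, T.filter (fun p => p.1 = i) = (L i).map fun g => (i, g) := by
      intro i
      rw [hTdef, List.filter_flatten, List.map_map]
      have inner : ∀ i' ∈ List.finRange N,
          (List.filter (fun p => decide (p.1 = i)) ∘ fun i' => (L i').map fun g => (i', g)) i'
            = if i' = i then (L i).map (fun g => (i, g)) else [] := by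
        intro i' _
        simp only [Function.comp_apply]
        by_cases h : i' = i
        · subst h
          rw [if_pos rfl]
          apply List.filter_eq_self.mpr
          intro a ha
          obtain ⟨g, hg, rfl⟩ := List.mem_map.mp ha
          simp
        · rw [if_neg h]
          apply List.filter_eq_nil_iff.mpr
          intro a ha
          obtain ⟨g, hg, rfl⟩ := List.mem_map.mp ha
          simp [h]
      rw [List.map_congr_left inner]
      exact flatten_ite _ i (List.finRange N) (List.nodup_finRange N) (List.mem_finRange i)
    set wbar : (Fin n → ℤ) → ℕ := fun g => if h : g ∈ S then w ⟨g, h⟩ else 0 with hwbardef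
    have hwbar_le : ∀ g, wbar g ≤ (T.map Prod.snd).count g := by
      intro g
      rw [hTcount]
      by_cases h : g ∈ S
      · have h1 : wbar g = w ⟨g, h⟩ := by rw [hwbardef]; simp [h]
        rw [h1]
        exact hwle ⟨g, h⟩
      · have h1 : wbar g = 0 := by rw [hwbardef]; simp [h]
        rw [h1]; exact Nat.zero_le _
    obtain ⟨s, t, hperm, hscount⟩ := select T wbar hwbar_le
    set sl : Fin N → List (Fin n → ℤ) :=
      fun i => (s.filter (fun p => p.1 = i)).map Prod.snd with hsldef
    set tl : Fin N → List (Fin n → ℤ) :=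
      fun i => (t.filter (fun p => p.1 = i)).map Prod.snd with htldef
    have hsplit : ∀ i, (sl i ++ tl i).Perm (L i) := by
      intro i
      have h1 := hperm.filter (fun p => decide (p.1 = i))
      rw [List.filter_append] at h1
      rw [hTfilter i] at h1
      have h2 := h1.map Prod.snd
      rw [List.map_append, hinner i] at h2
      exact h2
    have hpws : ∀ i, ((sl i) ++ (tl i)).Pairwise SC := fun i =>
      (List.Perm.pairwise_iff (fun h => sc_symm h) (hsplit i)).mpr (hL2 i)
    have hsums : ∀ i, (sl i).sum + (tl i).sum = (fun j => z (i, j)) := by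
      intro i
      rw [← List.sum_append, (hsplit i).sum_eq, hL3 i]
    set u : Fin N × Fin n → ℤ := fun p => (sl p.1).sum p.2 with hudef
    set u' : Fin N × Fin n → ℤ := fun p => (tl p.1).sum p.2 with hu'def
    have hzuu : z = u + u' := by
      funext p
      have := congrFun (hsums p.1) p.2
      simp only [Pi.add_apply] at this ⊢
      exact this.symm
    have hsmem : ∀ i, ∀ a ∈ sl i, a ∈ L i := fun i a ha =>
      (hsplit i).mem_iff.mp (List.mem_append_left _ ha)
    have htmem : ∀ i, ∀ a ∈ tl i, a ∈ L i := fun i a ha =>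
      (hsplit i).mem_iff.mp (List.mem_append_right _ ha)
    -- kernels for A
    have hkerAu : ∀ i, A.mulVec (fun j => u (i, j)) = 0 := by
      intro i
      have he : (fun j => u (i, j)) = (sl i).sum := rfl
      rw [he, mulVec_list_sum]
      apply List.sum_eq_zero
      intro y hy
      obtain ⟨a, ha, rfl⟩ := List.mem_map.mp hy
      exact (hL1 i a (hsmem i a ha)).2.1
    have hkerAu' : ∀ i, A.mulVec (fun j => u' (i, j)) = 0 := by
      intro i
      have he : (fun j => u' (i, j)) = (tl i).sum := rfl
      rw [he, mulVec_list_sum]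
      apply List.sum_eq_zero
      intro y hy
      obtain ⟨a, ha, rfl⟩ := List.mem_map.mp hy
      exact (hL1 i a (htmem i a ha)).2.1
    -- kernel for B : side u
    have hscount' : ∀ g : ↥S, ((s.map Prod.snd).count ↑g) = w g := by
      intro g
      rw [hscount ↑g, hwbardef]
      simp
    have hsmemS : ∀ a ∈ s.map Prod.snd, a ∈ S := by
      intro a ha
      obtain ⟨p, hp, rfl⟩ := List.mem_map.mp ha
      exact hmemS p.1 p.2 (hTmem p (hperm.subset (List.mem_append_left _ hp)))
    have hkerBu : (∑ i, B.mulVec (fun j => u (i, j))) = 0 := by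
      have e1 : ∀ i, B.mulVec (fun j => u (i, j))
          = ((s.filter (fun p => p.1 = i)).map (fun p => B.mulVec p.2)).sum := by
        intro i
        have he : (fun j => u (i, j)) = (sl i).sum := rfl
        rw [he, mulVec_list_sum, hsldef]
        rw [List.map_map]
        rfl
      rw [Finset.sum_congr rfl fun i _ => e1 i, filter_sum_parts]
      have e2 : s.map (fun p => B.mulVec p.2) = (s.map Prod.snd).map B.mulVec := by
        rw [List.map_map]; rfl
      rw [e2, count_smul_sum (S := S) B.mulVec _ hsmemS]
      rw [Finset.sum_congr rfl fun g _ => by rw [hscount' g]]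
      exact hwK.2
    have hkerBu' : (∑ i, B.mulVec (fun j => u' (i, j))) = 0 := by
      have hBadd : ∀ i, B.mulVec (fun j => z (i, j))
          = B.mulVec (fun j => u (i, j)) + B.mulVec (fun j => u' (i, j)) := by
        intro i
        have harg : (fun j => z (i, j))
            = (fun j => u (i, j)) + (fun j => u' (i, j)) := by
          funext j
          have := congrFun hzuu (i, j)
          simpa using this
        rw [harg, Matrix.mulVec_add]
      have hsumsplit : (∑ i, B.mulVec (fun j => z (i, j)))
          = (∑ i, B.mulVec (fun j => u (i, j))) + (∑ i, B.mulVec (fun j => u' (i, j))) := by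
        rw [← Finset.sum_add_distrib]
        exact Finset.sum_congr rfl fun i _ => hBadd i
      rw [hkerB, hkerBu] at hsumsplit
      simpa using hsumsplit.symm
    -- u ≠ 0
    have hune : u ≠ 0 := by
      obtain ⟨g0, hg0⟩ : ∃ g0 : ↥S, w g0 ≠ 0 := Function.ne_iff.mp hwK.1
      have hcpos : 0 < (s.map Prod.snd).count ↑g0 := by rw [hscount' g0]; omega
      obtain ⟨p, hp, hp2⟩ := List.mem_map.mp (List.count_pos_iff.mp hcpos)
      have hmem2 : p.2 ∈ sl p.1 :=
        List.mem_map.mpr ⟨p, List.mem_filter.mpr ⟨hp, by simp⟩, rfl⟩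
      have hpw_sl : (sl p.1).Pairwise SC := (List.pairwise_append.mp (hpws p.1)).1
      have hnz_sl : ∀ a ∈ sl p.1, a ≠ 0 := fun a ha => (hL1 p.1 a (hsmem p.1 a ha)).1
      have hsumne : (sl p.1).sum ≠ 0 := sc_sum_ne_zero hpw_sl hnz_sl hmem2
      intro h0
      apply hsumne
      funext j
      exact congrFun h0 (p.1, j)
    -- u' ≠ 0
    have hu'ne : u' ≠ 0 := by
      obtain ⟨g0, hg0⟩ : ∃ g0 : ↥S, w g0 ≠ v g0 := Function.ne_iff.mp hwne
      have hglt : w g0 < v g0 := lt_of_le_of_ne (hwle g0) hg0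
      have hcnt : (s.map Prod.snd).count ↑g0 + (t.map Prod.snd).count ↑g0
          = ∑ i, (L i).count ↑g0 := by
        rw [← List.count_append, ← List.map_append, (hperm.map Prod.snd).count_eq, hTcount]
      have hcpos : 0 < (t.map Prod.snd).count ↑g0 := by
        have := hscount' g0
        have hv0 : v g0 = ∑ i, (L i).count ↑g0 := rfl
        omega
      obtain ⟨p, hp, hp2⟩ := List.mem_map.mp (List.count_pos_iff.mp hcpos)
      have hmem2 : p.2 ∈ tl p.1 :=
        List.mem_map.mpr ⟨p, List.mem_filter.mpr ⟨hp, by simp⟩, rfl⟩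
      have hpw_tl : (tl p.1).Pairwise SC := (List.pairwise_append.mp (hpws p.1)).2.1
      have hnz_tl : ∀ a ∈ tl p.1, a ≠ 0 := fun a ha => (hL1 p.1 a (htmem p.1 a ha)).1
      have hsumne : (tl p.1).sum ≠ 0 := sc_sum_ne_zero hpw_tl hnz_tl hmem2
      intro h0
      apply hsumne
      funext j
      exact congrFun h0 (p.1, j)
    -- contradiction with z being Graver
    apply hz.2.2
    refine ⟨u, u', hune, hu'ne, (nfold_ker A B u).mpr ⟨hkerAu, hkerBu⟩,
      (nfold_ker A B u').mpr ⟨hkerAu', hkerBu'⟩, ?_, hzuu⟩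
    intro q
    exact (sc_split (hL2 q.1) (hsplit q.1)) q.2
  -- conclude
  have hvb := hgbound v hvmin
  have hlen : (∑ g : ↥S, v g) = ∑ i, (L i).length := by
    rw [hvdef, Finset.sum_comm]
    exact Finset.sum_congr rfl fun i _ => count_length (L i) (hmemS i)
  rw [Set.ncard_eq_toFinset_card']
  have hF1 : ∀ i ∈ {i : Fin N | ∃ j, z (i, j) ≠ 0}.toFinset, 1 ≤ (L i).length := by
    intro i hi
    rw [Set.mem_toFinset] at hi
    obtain ⟨j, hj⟩ := hi
    have hne : L i ≠ [] := by
      intro e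
      apply hj
      have := congrFun (hL3 i) j
      rw [e] at this
      simpa using this.symm
    exact List.length_pos_iff.mpr hne
  calc {i : Fin N | ∃ j, z (i, j) ≠ 0}.toFinset.card
      = ∑ i ∈ {i : Fin N | ∃ j, z (i, j) ≠ 0}.toFinset, 1 :=
        Finset.card_eq_sum_ones _
    _ ≤ ∑ i ∈ {i : Fin N | ∃ j, z (i, j) ≠ 0}.toFinset, (L i).length :=
        Finset.sum_le_sum hF1
    _ ≤ ∑ i : Fin N, (L i).length :=
        Finset.sum_le_sum_of_subset (Finset.subset_univ _)
    _ = ∑ g : ↥S, v g := hlen.symm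
    _ ≤ gbound := hvb
end

section
/- Inverse integer optimization certificate: Let P = {x : Dx = d, 0 ≤ x ≤ u} ⊆ ℝ^n, x* ∈ P ∩ ℤ^n, and f_j : ℝ → ℝ convex. There exist λ_1,…,λ_n ≥ 0, not all zero, such that x* minimizes ∑_j λ_j f_j(x_j) over P ∩ ℤ^n, if and only if the linear system ∑_j [f_j(x*_j + g_j) − f_j(x*_j)] λ_j ≥ 0 for all g ∈ G(D) with x* + g ∈ P, together with λ ≥ 0 and ∑_j λ_j > 0, has a solution. -/
/-- Convexity inequality: for sign-compatible steps `s, t`,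
`f (a+s) + f (a+t) ≤ f (a+s+t) + f a`. -/
lemma convex_step (f : ℝ → ℝ) (h : ConvexOn ℝ Set.univ f) (a s t : ℝ) (hst : 0 ≤ s * t) :
    f (a + s) + f (a + t) ≤ f (a + s + t) + f a := by
  have main : ∀ s t : ℝ, 0 ≤ s → 0 ≤ t → ∀ a : ℝ,
      f (a + s) + f (a + t) ≤ f (a + s + t) + f a := by
    intro s t hs ht a
    rcases eq_or_lt_of_le (add_nonneg hs ht) with hc | hc
    · have hs0 : s = 0 := by linarith
      have ht0 : t = 0 := by linarith
      simp [hs0, ht0]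
    · have h1 : f (a + s) ≤ (t / (s + t)) * f a + (s / (s + t)) * f (a + (s + t)) := by
        have h1' := h.2 (Set.mem_univ a) (Set.mem_univ (a + (s + t)))
          (div_nonneg ht hc.le) (div_nonneg hs hc.le) (by field_simp; ring)
        have heq : (t / (s + t)) • a + (s / (s + t)) • (a + (s + t)) = a + s := by
          simp only [smul_eq_mul]; field_simp; ring
        rw [heq] at h1'
        simpa using h1'
      have h2 : f (a + t) ≤ (s / (s + t)) * f a + (t / (s + t)) * f (a + (s + t)) := by
        have h2' := h.2 (Set.mem_univ a) (Set.mem_univ (a + (s + t)))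
          (div_nonneg hs hc.le) (div_nonneg ht hc.le) (by field_simp)
        have heq : (s / (s + t)) • a + (t / (s + t)) • (a + (s + t)) = a + t := by
          simp only [smul_eq_mul]; field_simp; ring
        rw [heq] at h2'
        simpa using h2'
      have hsum : t / (s + t) + s / (s + t) = 1 := by field_simp; ring
      have h3 : f (a + s) + f (a + t) ≤ f a + f (a + (s + t)) := by
        calc f (a + s) + f (a + t)
            ≤ (t / (s + t)) * f a + (s / (s + t)) * f (a + (s + t)) +
              ((s / (s + t)) * f a + (t / (s + t)) * f (a + (s + t))) := add_le_add h1 h2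
          _ = (t / (s + t) + s / (s + t)) * f a +
              (t / (s + t) + s / (s + t)) * f (a + (s + t)) := by ring
          _ = f a + f (a + (s + t)) := by rw [hsum]; ring
      have he : a + (s + t) = a + s + t := by ring
      rw [he] at h3
      linarith
  rcases mul_nonneg_iff.mp hst with ⟨hs, ht⟩ | ⟨hs, ht⟩
  · exact main s t hs ht a
  · have h0 := main (-s) (-t) (by linarith) (by linarith) (a + s + t)
    ring_nf at h0 ⊢
    linarith

/-- Sign-compatible components lie between `0` and their sum. -/
lemma between_of_sign (a b : ℤ) (h : 0 ≤ a * b) :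
    min 0 (a + b) ≤ a ∧ a ≤ max 0 (a + b) ∧ a.natAbs + b.natAbs = (a + b).natAbs := by
  rcases mul_nonneg_iff.mp h with ⟨ha, hb⟩ | ⟨ha, hb⟩ <;> refine ⟨by omega, by omega, by omega⟩

/-- The key induction: any kernel move to a feasible point has nonnegative
weighted objective increase, given the Graver criterion. -/
lemma key_induction
    (dd n : ℕ) (D : Matrix (Fin dd) (Fin n) ℤ) (dv : Fin dd → ℤ) (u : Fin n → ℤ)
    (f : Fin n → ℝ → ℝ) (hconv : ∀ j, ConvexOn ℝ Set.univ (f j))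
    (xs : Fin n → ℤ) (hxs : Feas D dv u xs)
    (lam : Fin n → ℝ) (hnn : ∀ j, 0 ≤ lam j)
    (hG : ∀ g : Fin n → ℤ, InGraver D g → Feas D dv u (xs + g) →
        0 ≤ ∑ j, (f j ((xs j : ℝ) + (g j : ℝ)) - f j (xs j : ℝ)) * lam j) :
    ∀ N : ℕ, ∀ z : Fin n → ℤ, (∑ j, (z j).natAbs) = N → D.mulVec z = 0 →
      Feas D dv u (xs + z) →
      0 ≤ ∑ j, (f j ((xs j : ℝ) + (z j : ℝ)) - f j (xs j : ℝ)) * lam j := by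
  intro N
  induction N using Nat.strong_induction_on with
  | _ N IH =>
    intro z hN hker hfe
    by_cases hz0 : z = 0
    · subst hz0; simp
    · by_cases hg : InGraver D z
      · exact hG z hg hfe
      · -- z decomposes
        have hdec : ∃ a b : Fin n → ℤ, a ≠ 0 ∧ b ≠ 0 ∧ D.mulVec a = 0 ∧ D.mulVec b = 0 ∧
            (∀ j, 0 ≤ a j * b j) ∧ z = a + b := by
          unfold InGraver at hg
          push_neg at hg
          exact hg hz0 hker
        obtain ⟨a, b, ha0, hb0, hka, hkb, hsign, hzab⟩ := hdec
        -- componentwise bounds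
        have hbounds : ∀ j, min 0 (z j) ≤ a j ∧ a j ≤ max 0 (z j) ∧
            min 0 (z j) ≤ b j ∧ b j ≤ max 0 (z j) ∧
            (a j).natAbs + (b j).natAbs = (z j).natAbs := by
          intro j
          have h1 := between_of_sign (a j) (b j) (hsign j)
          have h2 := between_of_sign (b j) (a j) (by rw [mul_comm]; exact hsign j)
          have hzj : z j = a j + b j := by rw [hzab]; rfl
          omega
        -- feasibility of xs + a and xs + b
        have hfeas_shift : ∀ w : Fin n → ℤ, D.mulVec w = 0 →
            (∀ j, min 0 (z j) ≤ w j ∧ w j ≤ max 0 (z j)) → Feas D dv u (xs + w) := by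
          intro w hkw hbw
          constructor
          · rw [Matrix.mulVec_add, hkw, hxs.1]; simp
          · intro j
            have h1 := hxs.2 j
            have h2 := hfe.2 j
            have h3 := hbw j
            simp only [Pi.add_apply] at h2 ⊢
            omega
        have hfa : Feas D dv u (xs + a) := hfeas_shift a hka (fun j => ⟨(hbounds j).1, (hbounds j).2.1⟩)
        have hfb : Feas D dv u (xs + b) := hfeas_shift b hkb
          (fun j => ⟨(hbounds j).2.2.1, (hbounds j).2.2.2.1⟩)
        -- norms decrease
        have hsumab : (∑ j, (a j).natAbs) + (∑ j, (b j).natAbs) = N := by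
          rw [← hN, ← Finset.sum_add_distrib]
          exact Finset.sum_congr rfl (fun j _ => (hbounds j).2.2.2.2)
        have hposa : 0 < ∑ j, (a j).natAbs := by
          obtain ⟨j, hj⟩ := Function.ne_iff.mp ha0
          exact Finset.sum_pos' (fun i _ => Nat.zero_le _)
            ⟨j, Finset.mem_univ j, by simpa using hj⟩
        have hposb : 0 < ∑ j, (b j).natAbs := by
          obtain ⟨j, hj⟩ := Function.ne_iff.mp hb0
          exact Finset.sum_pos' (fun i _ => Nat.zero_le _)
            ⟨j, Finset.mem_univ j, by simpa using hj⟩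
        have hIHa := IH (∑ j, (a j).natAbs) (by omega) a rfl hka hfa
        have hIHb := IH (∑ j, (b j).natAbs) (by omega) b rfl hkb hfb
        -- convexity superadditivity
        have hstep : ∑ j, (f j ((xs j : ℝ) + (a j : ℝ)) - f j (xs j : ℝ)) * lam j +
            ∑ j, (f j ((xs j : ℝ) + (b j : ℝ)) - f j (xs j : ℝ)) * lam j ≤
            ∑ j, (f j ((xs j : ℝ) + (z j : ℝ)) - f j (xs j : ℝ)) * lam j := by
          rw [← Finset.sum_add_distrib]
          apply Finset.sum_le_sum
          intro j _
          have hzj : (z j : ℝ) = (a j : ℝ) + (b j : ℝ) := by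
            have : z j = a j + b j := by rw [hzab]; rfl
            exact_mod_cast congrArg (Int.cast : ℤ → ℝ) this
          have hst : (0 : ℝ) ≤ (a j : ℝ) * (b j : ℝ) := by exact_mod_cast hsign j
          have hcv := convex_step (f j) (hconv j) (xs j : ℝ) (a j : ℝ) (b j : ℝ) hst
          rw [hzj, ← add_assoc]
          have hl := hnn j
          nlinarith [mul_nonneg hl (by linarith : (0:ℝ) ≤
            f j ((xs j : ℝ) + (a j : ℝ) + (b j : ℝ)) + f j (xs j : ℝ) -
            f j ((xs j : ℝ) + (a j : ℝ)) - f j ((xs j : ℝ) + (b j : ℝ)))]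
        linarith

/-- Inverse integer optimization: weights `λ ≥ 0`, not all zero, making `x*` optimal
for `∑_j λ_j f_j(x_j)` exist iff the finite linear system over the feasible Graver
moves at `x*` is solvable. -/
theorem inverse_optimization_graver_criterion
    (dd n : ℕ) (D : Matrix (Fin dd) (Fin n) ℤ) (dv : Fin dd → ℤ) (u : Fin n → ℤ)
    (f : Fin n → ℝ → ℝ) (hconv : ∀ j, ConvexOn ℝ Set.univ (f j))
    (xs : Fin n → ℤ) (hxs : Feas D dv u xs) :
    (∃ lam : Fin n → ℝ, (∀ j, 0 ≤ lam j) ∧ lam ≠ 0 ∧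
      ∀ x : Fin n → ℤ, Feas D dv u x →
        ∑ j, lam j * f j (xs j : ℝ) ≤ ∑ j, lam j * f j (x j : ℝ)) ↔
    (∃ lam : Fin n → ℝ, (∀ j, 0 ≤ lam j) ∧ 0 < ∑ j, lam j ∧
      ∀ g : Fin n → ℤ, InGraver D g → Feas D dv u (xs + g) →
        0 ≤ ∑ j, (f j ((xs j : ℝ) + (g j : ℝ)) - f j (xs j : ℝ)) * lam j) := by
  constructor
  · rintro ⟨lam, hnn, hne, hopt⟩
    refine ⟨lam, hnn, ?_, ?_⟩
    · obtain ⟨j, hj⟩ := Function.ne_iff.mp hne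
      exact Finset.sum_pos' (fun i _ => hnn i)
        ⟨j, Finset.mem_univ j, lt_of_le_of_ne (hnn j) (Ne.symm hj)⟩
    · intro g _ hfeas
      have h := hopt (xs + g) hfeas
      have hcast : ∀ j, (((xs + g) j : ℤ) : ℝ) = (xs j : ℝ) + (g j : ℝ) := by
        intro j; push_cast [Pi.add_apply]; ring
      have h2 : ∑ j, lam j * f j (xs j : ℝ) ≤ ∑ j, lam j * f j ((xs j : ℝ) + (g j : ℝ)) := by
        convert h using 2 with j
        rw [hcast j]
      have : ∑ j, (f j ((xs j : ℝ) + (g j : ℝ)) - f j (xs j : ℝ)) * lam j =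
          ∑ j, lam j * f j ((xs j : ℝ) + (g j : ℝ)) - ∑ j, lam j * f j (xs j : ℝ) := by
        rw [← Finset.sum_sub_distrib]
        exact Finset.sum_congr rfl (fun j _ => by ring)
      rw [this]
      linarith
  · rintro ⟨lam, hnn, hpos, hG⟩
    refine ⟨lam, hnn, ?_, ?_⟩
    · intro h0
      rw [h0] at hpos
      simp at hpos
    · intro x hfx
      have hker : D.mulVec (x - xs) = 0 := by
        rw [Matrix.mulVec_sub, hfx.1, hxs.1]; simp
      have hfe : Feas D dv u (xs + (x - xs)) := by
        have : xs + (x - xs) = x := by ring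
        rw [this]; exact hfx
      have h := key_induction dd n D dv u f hconv xs hxs lam hnn hG
        (∑ j, ((x - xs) j).natAbs) (x - xs) rfl hker hfe
      have hcast : ∀ j, (xs j : ℝ) + (((x - xs) j : ℤ) : ℝ) = (x j : ℝ) := by
        intro j; push_cast [Pi.sub_apply]; ring
      have h2 : 0 ≤ ∑ j, (f j (x j : ℝ) - f j (xs j : ℝ)) * lam j := by
        convert h using 2 with j
        rw [hcast j]
      have : ∑ j, (f j (x j : ℝ) - f j (xs j : ℝ)) * lam j =
          ∑ j, lam j * f j (x j : ℝ) - ∑ j, lam j * f j (xs j : ℝ) := by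
        rw [← Finset.sum_sub_distrib]
        exact Finset.sum_congr rfl (fun j _ => by ring)
      rw [this] at h2
      linarith
end
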